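/- Let X be a path-connected topological space, x ∈ X, and n ≥ 1. The map that sends a based continuous map γ : (Sⁿ, s₀) → (P(X), x) to the same underlying function viewed as a based map (Sⁿ, s₀) → (X, x) induces a group isomorphism πₙ(P(X), x) ≅ πₙ(X, x). -/

import Mathlib

open TopologicalSpace Topology

/-- The Peano topology on `X`: generated by all path components of all open subsets. -/
def peanoTopology (X : Type*) [TopologicalSpace X] : TopologicalSpace X :=
  TopologicalSpace.generateFrom
    {C | ∃ (U : Set X) (x : X), IsOpen U ∧ x ∈ U ∧ C = pathComponentIn U x}

/-- The universal Peano space of `X`: the same underlying set with the Peano topology. -/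
def Peanify (X : Type*) [TopologicalSpace X] : Type _ := X

instance (X : Type*) [TopologicalSpace X] : TopologicalSpace (Peanify X) :=
  peanoTopology X

/-- The universal Peano map `P(X) → X` (the identity on underlying sets), as a
continuous map. -/
def ofPeanifyCM (X : Type*) [TopologicalSpace X] : C(Peanify X, X) where
  toFun := fun x => (x : X)
  continuous_toFun := by
    apply continuous_def.2
    intro U hU
    show TopologicalSpace.GenerateOpen _ U
    have hrw : U = ⋃₀ {C : Set X | ∃ x ∈ U, C = pathComponentIn U x} := by
      ext y
      constructor
      · intro hy
        exact ⟨pathComponentIn U y, ⟨y, hy, rfl⟩, mem_pathComponentIn_self hy⟩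
      · rintro ⟨C, ⟨x, hx, rfl⟩, hy⟩
        exact pathComponentIn_subset hy
    rw [hrw]
    apply TopologicalSpace.GenerateOpen.sUnion
    rintro C ⟨x, hx, rfl⟩
    exact TopologicalSpace.GenerateOpen.basic _ ⟨U, x, hU, hx, rfl⟩

/-- A generalized loop in `P(X)`, viewed (via the universal Peano map) as a generalized
loop in `X` with the same underlying function. -/
def GenLoop.peanify {X : Type*} [TopologicalSpace X] {N : Type*} {x : X}
    (γ : GenLoop N (Peanify X) x) : GenLoop N X x :=
  ⟨(ofPeanifyCM X).comp γ.1, fun y hy => γ.2 y hy⟩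

/-- Port helper: the `Group` instance of `HomotopyGroup` on `Peanify X` at a base point
`x : X` (this is just `HomotopyGroup.group`; needed because instance search no longer unfolds
`Peanify X` to `X` when matching the type of the base point). -/
noncomputable instance instGroupHomotopyGroupPeanify (X : Type*) [TopologicalSpace X] (x : X)
    (N : Type*) [DecidableEq N] [Nonempty N] : Group (HomotopyGroup N (Peanify X) x) :=
  HomotopyGroup.group N

section Aux

open Set Metric

theorem IsPathConnected.prodSet {A B : Type*} [TopologicalSpace A] [TopologicalSpace B]
    {s : Set A} {t : Set B} (hs : IsPathConnected s) (ht : IsPathConnected t) :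
    IsPathConnected (s ×ˢ t) := by
  obtain ⟨a, ha, hs'⟩ := hs
  obtain ⟨b, hb, ht'⟩ := ht
  refine ⟨(a, b), ⟨ha, hb⟩, ?_⟩
  rintro ⟨c, d⟩ ⟨hc, hd⟩
  obtain ⟨γ, hγ⟩ := hs' hc
  obtain ⟨δ, hδ⟩ := ht' hd
  exact ⟨γ.prod δ, fun τ => ⟨hγ τ, hδ τ⟩⟩

theorem isPathConnected_univ_pi {ι : Type*} {Y : ι → Type*} [∀ i, TopologicalSpace (Y i)]
    {s : ∀ i, Set (Y i)} (hs : ∀ i, IsPathConnected (s i)) :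
    IsPathConnected (Set.pi Set.univ s) := by
  choose a ha hjoin using hs
  refine ⟨a, fun i _ => ha i, ?_⟩
  intro g hg
  have h : ∀ i, JoinedIn (s i) (a i) (g i) := fun i => hjoin i (hg i trivial)
  choose γ hγ using h
  exact ⟨Path.pi γ, fun t i _ => hγ i t⟩

instance Prod.locPathConnectedSpace' {A B : Type*} [TopologicalSpace A] [TopologicalSpace B]
    [LocallyPathConnectedSpace A] [LocallyPathConnectedSpace B] :
    LocallyPathConnectedSpace (A × B) := by
  rw [locallyPathConnectedSpace_iff_pathComponentIn_mem_nhds]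
  rintro ⟨x, y⟩ u hu hxu
  obtain ⟨a, b, ha, hb, hx, hy, hab⟩ := isOpen_prod_iff.mp hu x y hxu
  have h1 : IsPathConnected (pathComponentIn a x ×ˢ pathComponentIn b y) :=
    (isPathConnected_pathComponentIn hx).prodSet (isPathConnected_pathComponentIn hy)
  refine Filter.mem_of_superset
    (prod_mem_nhds ((ha.pathComponentIn x).mem_nhds (mem_pathComponentIn_self hx))
      ((hb.pathComponentIn y).mem_nhds (mem_pathComponentIn_self hy)))
    (h1.subset_pathComponentIn ⟨mem_pathComponentIn_self hx, mem_pathComponentIn_self hy⟩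
      ((Set.prod_mono pathComponentIn_subset pathComponentIn_subset).trans hab))

instance Pi.locPathConnectedSpace' {ι : Type*} [Finite ι] {Y : ι → Type*}
    [∀ i, TopologicalSpace (Y i)] [∀ i, LocallyPathConnectedSpace (Y i)] :
    LocallyPathConnectedSpace (∀ i, Y i) := by
  rw [locallyPathConnectedSpace_iff_pathComponentIn_mem_nhds]
  intro f u hu hfu
  obtain ⟨a, ha, hsub⟩ := isOpen_pi_iff'.mp hu f hfu
  have hmem : ∀ i, f i ∈ a i := fun i => (ha i).2
  have hopen : ∀ i, IsOpen (a i) := fun i => (ha i).1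
  have h1 : IsPathConnected (Set.pi Set.univ fun i => pathComponentIn (a i) (f i)) :=
    isPathConnected_univ_pi fun i => isPathConnected_pathComponentIn (hmem i)
  refine Filter.mem_of_superset
    (set_pi_mem_nhds Set.finite_univ fun i _ =>
      ((hopen i).pathComponentIn (f i)).mem_nhds (mem_pathComponentIn_self (hmem i)))
    (h1.subset_pathComponentIn (fun i _ => mem_pathComponentIn_self (hmem i))
      ((Set.pi_mono fun i _ => pathComponentIn_subset).trans hsub))

theorem Convex.locPathConnectedSpace' {E : Type*} [NormedAddCommGroup E] [NormedSpace ℝ E]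
    {s : Set E} (hs : Convex ℝ s) : LocallyPathConnectedSpace s := by
  rw [locallyPathConnectedSpace_iff_pathComponentIn_mem_nhds]
  intro y u hu hyu
  obtain ⟨v, hv, rfl⟩ := isOpen_induced_iff.mp hu
  obtain ⟨ε, hε, hball⟩ := Metric.isOpen_iff.mp hv y hyu
  have hW : IsPathConnected ((Subtype.val : s → E) ⁻¹' (s ∩ Metric.ball (y : E) ε)) := by
    apply IsPathConnected.preimage_coe
    · exact (hs.inter (convex_ball _ _)).isPathConnected
        ⟨y, y.2, Metric.mem_ball_self hε⟩
    · exact inter_subset_left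
  have hmem : y ∈ (Subtype.val : s → E) ⁻¹' (s ∩ Metric.ball (y : E) ε) :=
    ⟨y.2, Metric.mem_ball_self hε⟩
  have hWu : ((Subtype.val : s → E) ⁻¹' (s ∩ Metric.ball (y : E) ε)) ⊆
      Subtype.val ⁻¹' v := fun z hz => hball hz.2
  refine Filter.mem_of_superset ?_ (hW.subset_pathComponentIn hmem hWu)
  have heq : ((Subtype.val : s → E) ⁻¹' (s ∩ Metric.ball (y : E) ε)) =
      Subtype.val ⁻¹' (Metric.ball (y : E) ε) := by
    ext z; simp [z.2]
  rw [heq]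
  exact (Metric.isOpen_ball.preimage continuous_subtype_val).mem_nhds (Metric.mem_ball_self hε)

open unitInterval

instance : LocallyPathConnectedSpace I := (convex_Icc (0:ℝ) 1).locPathConnectedSpace'

/-- Universal property of the Peano space: continuous maps from locally path-connected
spaces to `X` are continuous into `Peanify X`. -/
theorem continuous_into_peanify {Y : Type*} [TopologicalSpace Y] [LocallyPathConnectedSpace Y]
    {X : Type*} [TopologicalSpace X] {f : Y → X} (hf : Continuous f) :
    @Continuous Y (Peanify X) _ _ f := by
  show Continuous[_, TopologicalSpace.generateFrom
    {C | ∃ (U : Set X) (x : X), IsOpen U ∧ x ∈ U ∧ C = pathComponentIn U x}] f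
  rw [continuous_generateFrom_iff]
  rintro C ⟨U, x, hU, hx, rfl⟩
  rw [isOpen_iff_mem_nhds]
  intro y hy
  have hy : f y ∈ pathComponentIn U x := hy
  have h1 : IsOpen (f ⁻¹' U) := hU.preimage hf
  have h2 : pathComponentIn (f ⁻¹' U) y ⊆ f ⁻¹' (pathComponentIn U x) := by
    intro z hz
    obtain ⟨γ, hγ⟩ := hz
    have hj : JoinedIn U (f y) (f z) := ⟨γ.map hf, fun t => hγ t⟩
    have hm : f z ∈ pathComponentIn U (f y) := hj
    rwa [pathComponentIn_congr hy] at hm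
  have hyU : f y ∈ U := pathComponentIn_subset hy
  have hyU' : y ∈ f ⁻¹' U := hyU
  exact Filter.mem_of_superset
    ((h1.pathComponentIn y).mem_nhds
      (mem_pathComponentIn_self hyU')) h2

open Topology.Homotopy GenLoop

variable {X : Type*} [TopologicalSpace X] {n : ℕ} {x : X}

/-- The inverse of `GenLoop.peanify`. -/
def GenLoop.unpeanify (γ : GenLoop (Fin (n+1)) X x) : GenLoop (Fin (n+1)) (Peanify X) x :=
  ⟨⟨γ.1, continuous_into_peanify γ.1.continuous⟩, fun y hy => γ.2 y hy⟩

theorem GenLoop.Homotopic.unpeanify' {γ δ : GenLoop (Fin (n+1)) (Peanify X) x}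
    (h : GenLoop.Homotopic (GenLoop.peanify γ) (GenLoop.peanify δ)) : GenLoop.Homotopic γ δ := by
  obtain ⟨H⟩ := h
  exact ⟨{ toFun := H.toFun
           continuous_toFun := continuous_into_peanify H.continuous
           map_zero_left := fun y => H.map_zero_left y
           map_one_left := fun y => H.map_one_left y
           prop' := fun t y hy => H.prop' t y hy }⟩

theorem GenLoop.Homotopic.peanify' {γ δ : GenLoop (Fin (n+1)) (Peanify X) x}
    (h : GenLoop.Homotopic γ δ) :
    GenLoop.Homotopic (GenLoop.peanify γ) (GenLoop.peanify δ) := by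
  obtain ⟨H⟩ := h
  exact ⟨{ toFun := H.toFun
           continuous_toFun := (ofPeanifyCM X).continuous.comp H.continuous
           map_zero_left := fun y => H.map_zero_left y
           map_one_left := fun y => H.map_one_left y
           prop' := fun t y hy => H.prop' t y hy }⟩

theorem GenLoop.peanify_transAt (i : Fin (n+1)) (f g : GenLoop (Fin (n+1)) (Peanify X) x) :
    GenLoop.peanify (GenLoop.transAt i f g) =
      GenLoop.transAt i (GenLoop.peanify f) (GenLoop.peanify g) := by
  apply Subtype.ext
  apply ContinuousMap.ext
  intro y
  show (GenLoop.transAt i f g).1 y = (GenLoop.transAt i (peanify f) (peanify g)).1 y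
  simp only [GenLoop.transAt, GenLoop.coe_copy]
  rfl

end Aux

/-- for a path-connected space `X`, `x ∈ X` and `n ≥ 1`, the map sending a
based map `Sⁿ → P(X)` (here: a generalized loop) to the same underlying function viewed as
a based map into `X` induces a group isomorphism `πₙ(P(X), x) ≅ πₙ(X, x)`. -/
theorem homotopyGroup_peanify_iso (X : Type*) [TopologicalSpace X] [PathConnectedSpace X]
    (x : X) (n : ℕ) :
    ∃ e : HomotopyGroup (Fin (n + 1)) (Peanify X) x ≃* HomotopyGroup (Fin (n + 1)) X x,
      ∀ γ : GenLoop (Fin (n + 1)) (Peanify X) x, e ⟦γ⟧ = ⟦GenLoop.peanify γ⟧ := by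
  classical
  let e0 : GenLoop (Fin (n + 1)) (Peanify X) x ≃ GenLoop (Fin (n + 1)) X x :=
  { toFun := GenLoop.peanify
    invFun := GenLoop.unpeanify
    left_inv := fun γ => Subtype.ext (ContinuousMap.ext fun _ => rfl)
    right_inv := fun γ => Subtype.ext (ContinuousMap.ext fun _ => rfl) }
  have hiff : ∀ a b : GenLoop (Fin (n + 1)) (Peanify X) x,
      GenLoop.Homotopic a b ↔ GenLoop.Homotopic (e0 a) (e0 b) :=
    fun a b => ⟨GenLoop.Homotopic.peanify', GenLoop.Homotopic.unpeanify'⟩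
  let eq : HomotopyGroup (Fin (n + 1)) (Peanify X) x ≃ HomotopyGroup (Fin (n + 1)) X x :=
    Quotient.congr e0 hiff
  let mkP : GenLoop (Fin (n + 1)) (Peanify X) x → HomotopyGroup (Fin (n + 1)) (Peanify X) x :=
    fun g => ⟦g⟧
  let mkX : GenLoop (Fin (n + 1)) X x → HomotopyGroup (Fin (n + 1)) X x := fun g => ⟦g⟧
  have hmul : ∀ a b : HomotopyGroup (Fin (n + 1)) (Peanify X) x,
      eq (a * b) = eq a * eq b := by
    intro a b
    induction a using Quotient.inductionOn with
    | h p =>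
    induction b using Quotient.inductionOn with
    | h q =>
    have h1 : mkP p * mkP q = mkP (GenLoop.transAt 0 q p) := HomotopyGroup.mul_spec
    have h2 : mkX (GenLoop.peanify p) * mkX (GenLoop.peanify q)
        = mkX (GenLoop.transAt 0 (GenLoop.peanify q) (GenLoop.peanify p)) :=
      HomotopyGroup.mul_spec
    show eq (mkP p * mkP q) = eq (mkP p) * eq (mkP q)
    calc eq (mkP p * mkP q) = eq (mkP (GenLoop.transAt 0 q p)) := congrArg eq h1
      _ = mkX (GenLoop.peanify (GenLoop.transAt 0 q p)) := rfl
      _ = mkX (GenLoop.transAt 0 (GenLoop.peanify q) (GenLoop.peanify p)) := by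
            rw [GenLoop.peanify_transAt]
      _ = mkX (GenLoop.peanify p) * mkX (GenLoop.peanify q) := h2.symm
      _ = eq (mkP p) * eq (mkP q) := rfl
  exact ⟨{ eq with map_mul' := hmul }, fun γ => rfl⟩
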